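/- Let G be a pro-p group acting on a pro-p tree T and let U ≤ G be a procyclic subgroup that does not stabilize any edge of T but stabilizes some vertex v. Then the normalizer N_G(U) fixes v; in particular N_G(U) = N_{G_v}(U). -/

import Mathlib

/-- A profinite graph: a topological space `T` (compact, Hausdorff and totally
disconnected in applications) with continuous incidence maps `d0 d1 : T → T`
satisfying `dᵢ ∘ dⱼ = dⱼ`. -/
structure ProfGraph (T : Type*) [TopologicalSpace T] where
  d0 : T → T
  d1 : T → T
  cont0 : Continuous d0
  cont1 : Continuous d1
  d00 : ∀ x, d0 (d0 x) = d0 x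
  d01 : ∀ x, d0 (d1 x) = d1 x
  d10 : ∀ x, d1 (d0 x) = d0 x
  d11 : ∀ x, d1 (d1 x) = d1 x

namespace ProfGraph

variable {T : Type*} [TopologicalSpace T] (G : ProfGraph T)

/-- `x` is a vertex; equivalently `d0 x = x`. -/
def IsVertex (x : T) : Prop := G.d0 x = x

/-- The space of vertices of `G`. -/
abbrev Verts : Type _ := {x : T // G.IsVertex x}

theorem isVertex_d0 (x : T) : G.IsVertex (G.d0 x) := G.d00 x
theorem isVertex_d1 (x : T) : G.IsVertex (G.d1 x) := G.d01 x

/-- The function `T → 𝔽_p` induced by a function on vertices via `d0`. -/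
def ed0 (f : G.Verts → ZMod p) : T → ZMod p := fun x => f ⟨G.d0 x, G.isVertex_d0 x⟩

/-- The function `T → 𝔽_p` induced by a function on vertices via `d1`. -/
def ed1 (f : G.Verts → ZMod p) : T → ZMod p := fun x => f ⟨G.d1 x, G.isVertex_d1 x⟩

/-- `G` is a pro-`p` tree: the sequence of free profinite `𝔽_p`-modules
`0 → 𝔽_p[[E*(T), *]] → 𝔽_p[[V(T)]] → 𝔽_p → 0` (with maps `e ↦ d1(e) − d0(e)` and the
augmentation) is exact.  By the duality between profinite and discrete `𝔽_p`-modules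
this is expressed equivalently (and formalized here) by exactness of the dual sequence
of discrete modules of locally constant functions
`0 → 𝔽_p → LC(V(T), 𝔽_p) → {g ∈ LC(T, 𝔽_p) | g vanishes on V(T)} → 0`,
where the second map sends `f` to `f∘d1 − f∘d0`:
(i) the vertex set is nonempty; (ii) a locally constant function on vertices with
`f∘d0 = f∘d1` is constant ("connectedness"); (iii) every locally constant function on
`T` vanishing on vertices has the form `f∘d1 − f∘d0` ("simple connectedness"). -/
def IsProPTree (p : ℕ) : Prop :=
  Nonempty G.Verts ∧
    (∀ f : G.Verts → ZMod p, IsLocallyConstant f →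
      (∀ x : T, G.ed0 f x = G.ed1 f x) → ∃ c, ∀ v, f v = c) ∧
    (∀ g : T → ZMod p, IsLocallyConstant g → (∀ x, G.IsVertex x → g x = 0) →
      ∃ f : G.Verts → ZMod p, IsLocallyConstant f ∧ ∀ x, g x = G.ed1 f x - G.ed0 f x)

/-- The induced profinite graph structure on a closed subgraph. -/
def restrict (S : Set T) (h0 : Set.MapsTo G.d0 S S) (h1 : Set.MapsTo G.d1 S S) :
    ProfGraph S where
  d0 x := ⟨G.d0 x.1, h0 x.2⟩
  d1 x := ⟨G.d1 x.1, h1 x.2⟩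
  cont0 := Continuous.subtype_mk (G.cont0.comp continuous_subtype_val) fun x => h0 x.2
  cont1 := Continuous.subtype_mk (G.cont1.comp continuous_subtype_val) fun x => h1 x.2
  d00 x := Subtype.ext (G.d00 x.1)
  d01 x := Subtype.ext (G.d01 x.1)
  d10 x := Subtype.ext (G.d10 x.1)
  d11 x := Subtype.ext (G.d11 x.1)

/-- `S` is a pro-`p` subtree of `T`: a closed subset, closed under the incidence maps,
which is a pro-`p` tree for the induced structure. -/
def IsSubtree (p : ℕ) (S : Set T) : Prop :=
  IsClosed S ∧ ∃ (h0 : Set.MapsTo G.d0 S S) (h1 : Set.MapsTo G.d1 S S),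
    (G.restrict S h0 h1).IsProPTree p

/-- The geodesic `[v, w]`: the smallest pro-`p` subtree of `T` containing `v` and
`w`. -/
def geodesic (p : ℕ) (v w : T) : Set T :=
  ⋂₀ {S : Set T | G.IsSubtree p S ∧ v ∈ S ∧ w ∈ S}

end ProfGraph


set_option linter.unusedSectionVars false

namespace NormFixAux

theorem ite_lc {X : Type*} [TopologicalSpace X] {α : Type*} {W : Set X} (hW : IsClopen W)
    (a b : α) [DecidablePred (· ∈ W)] :
    IsLocallyConstant fun x => if x ∈ W then a else b := by
  classical
  intro s
  have : (fun x => if x ∈ W then a else b) ⁻¹' s =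
      ((if a ∈ s then W else ∅) ∪ (if b ∈ s then Wᶜ else ∅)) := by
    ext x
    by_cases hx : x ∈ W <;> by_cases ha : a ∈ s <;> by_cases hb : b ∈ s <;>
      simp [hx, ha, hb]
  rw [this]
  apply IsOpen.union
  · split
    · exact hW.2
    · exact isOpen_empty
  · split
    · exact hW.compl.2
    · exact isOpen_empty

theorem indicator_lc {X : Type*} [TopologicalSpace X] {M : Type*} [Zero M] {S : Set X}
    (hS : IsClopen S) (c : M) : IsLocallyConstant (S.indicator fun _ => c) := by
  classical
  have h : S.indicator (fun _ => c) = fun x => if x ∈ S then c else 0 := by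
    funext x
    rw [Set.indicator_apply]
  rw [h]
  exact ite_lc hS c 0

theorem sum_lc {X : Type*} [TopologicalSpace X] {M : Type*} [AddCommMonoid M] {ι : Type*}
    (s : Finset ι) (f : ι → X → M) (h : ∀ i ∈ s, IsLocallyConstant (f i)) :
    IsLocallyConstant (fun x => ∑ i ∈ s, f i x) := by
  classical
  induction s using Finset.induction with
  | empty => simp only [Finset.sum_empty]; exact IsLocallyConstant.const (0 : M)
  | @insert a s ha ih =>
    have : (fun x => ∑ i ∈ insert a s, f i x) =
        fun x => f a x + ∑ i ∈ s, f i x := by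
      funext x; rw [Finset.sum_insert ha]
    rw [this]
    exact (h a (Finset.mem_insert_self a s)).comp₂
      (ih fun i hi => h i (Finset.mem_insert_of_mem hi)) (· + ·)

section Action

variable {Γ : Type} [Group Γ] [TopologicalSpace Γ] [IsTopologicalGroup Γ] [CompactSpace Γ]
variable {T : Type} [TopologicalSpace T] [CompactSpace T] [T2Space T]
variable [MulAction Γ T]

theorem cont_smul (hcont : Continuous fun q : Γ × T => q.1 • q.2) (γ : Γ) :
    Continuous fun x : T => γ • x :=
  hcont.comp (continuous_const.prodMk continuous_id)

theorem cont_smul' (hcont : Continuous fun q : Γ × T => q.1 • q.2) (x : T) :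
    Continuous fun γ : Γ => γ • x :=
  hcont.comp (continuous_id.prodMk continuous_const)

/-- translate of a set -/
def sm (γ : Γ) (S : Set T) : Set T := (fun x => γ⁻¹ • x) ⁻¹' S

theorem mem_sm {γ : Γ} {S : Set T} {x : T} : x ∈ sm γ S ↔ γ⁻¹ • x ∈ S := Iff.rfl

theorem smul_mem_sm {γ : Γ} {S : Set T} {y : T} : γ • y ∈ sm γ S ↔ y ∈ S := by
  simp [sm, inv_smul_smul]

theorem mem_sm_iff_eq {γ : Γ} {S : Set T} {x : T} :
    x ∈ sm γ S ↔ ∃ c ∈ S, x = γ • c := by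
  constructor
  · intro h; exact ⟨γ⁻¹ • x, h, (smul_inv_smul γ x).symm⟩
  · rintro ⟨c, hc, rfl⟩; exact smul_mem_sm.2 hc

theorem isClopen_sm (hcont : Continuous fun q : Γ × T => q.1 • q.2) (γ : Γ) {S : Set T}
    (hS : IsClopen S) : IsClopen (sm γ S) :=
  hS.preimage (cont_smul hcont γ⁻¹)

/-- The saturation `A • C` of a set of points by a set of group elements. -/
def orbSet (A : Set Γ) (C : Set T) : Set T := (fun q : Γ × T => q.1 • q.2) '' (A ×ˢ C)

theorem mem_orbSet {A : Set Γ} {C : Set T} {y : T} :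
    y ∈ orbSet A C ↔ ∃ s ∈ A, ∃ c ∈ C, y = s • c := by
  constructor
  · rintro ⟨⟨s, c⟩, ⟨hs, hc⟩, rfl⟩; exact ⟨s, hs, c, hc, rfl⟩
  · rintro ⟨s, hs, c, hc, rfl⟩; exact ⟨⟨s, c⟩, ⟨hs, hc⟩, rfl⟩

theorem orbSet_eq_iUnion {A : Set Γ} {C : Set T} : orbSet A C = ⋃ s ∈ A, sm s C := by
  ext y
  simp only [mem_orbSet, Set.mem_iUnion, mem_sm_iff_eq]
  tauto

theorem isClopen_orbSet (hcont : Continuous fun q : Γ × T => q.1 • q.2)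
    {A : Set Γ} {C : Set T} (hA : IsCompact A) (hC : IsClopen C) :
    IsClopen (orbSet A C) := by
  constructor
  · exact ((hA.prod hC.1.isCompact).image hcont).isClosed
  · rw [orbSet_eq_iUnion]
    exact isOpen_biUnion fun s _ => (isClopen_sm hcont s hC).2


/-- The subgroup of elements moving `x` within its `V`-orbit (`V` normal). -/
def relStab (V : Subgroup Γ) (hVn : V.Normal) (x : T) : Subgroup Γ where
  carrier := {γ | ∃ s ∈ V, γ • x = s • x}
  one_mem' := ⟨1, one_mem _, rfl⟩
  mul_mem' := by
    rintro γ γ' ⟨s, hs, hγ⟩ ⟨s', hs', hγ'⟩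
    refine ⟨γ * s' * γ⁻¹ * s, V.mul_mem (hVn.conj_mem s' hs' γ) hs, ?_⟩
    have h1 : (γ * γ') • x = (γ * s') • x := by
      rw [mul_smul, hγ', mul_smul]
    have h2 : (γ * s' * γ⁻¹ * s) • x = (γ * s' * γ⁻¹) • (γ • x) := by
      rw [mul_smul, hγ, mul_smul]
    rw [h1, h2, ← mul_smul]
    congr 1
    group
  inv_mem' := by
    rintro γ ⟨s, hs, hγ⟩
    refine ⟨γ⁻¹ * s⁻¹ * γ, by simpa using hVn.conj_mem s⁻¹ (V.inv_mem hs) γ⁻¹, ?_⟩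
    have h5 : (γ⁻¹ * s⁻¹ * γ) • x = γ⁻¹ • x := by
      rw [mul_smul, mul_smul, hγ, inv_smul_smul]
    exact h5.symm

theorem mem_relStab {V : Subgroup Γ} {hVn : V.Normal} {x : T} {γ : Γ} :
    γ ∈ relStab V hVn x ↔ ∃ s ∈ V, γ • x = s • x := Iff.rfl


end Action

section Shift

variable {Γ : Type} [Group Γ] [TopologicalSpace Γ] [IsTopologicalGroup Γ] [CompactSpace Γ]
variable {T : Type} [TopologicalSpace T] [CompactSpace T] [T2Space T] [TotallyDisconnectedSpace T]
variable [MulAction Γ T]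

variable (u : Γ) (V : Subgroup Γ) (N : ℕ) (p : ℕ)

/-- Separation property of a small clopen set. -/
def SepN (C : Set T) : Prop :=
  ∀ y ∈ C, ∀ z ∈ C, ∀ k : ℤ, (∃ s ∈ V, y = u ^ k • (s • z)) → (p : ℤ) ∣ k

/-- Part of the saturation with exponent congruent to `i` mod `p`. -/
def Apart (C : Set T) (i : ZMod p) : Set T :=
  ⋃ k ∈ (Finset.range N).filter (fun k : ℕ => ((k : ZMod p) = i)),
    sm (u ^ k) (orbSet (V : Set Γ) C)

/-- The saturation of `C` under `V` and powers of `u`. -/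
def SatC (C : Set T) : Set T :=
  ⋃ k ∈ Finset.range N, sm (u ^ k) (orbSet (V : Set Γ) C)

theorem mem_Apart {C : Set T} {i : ZMod p} {x : T} :
    x ∈ Apart u V N p C i ↔
      ∃ k, k < N ∧ ((k : ZMod p) = i) ∧ ∃ s ∈ V, ∃ c ∈ C, x = u ^ k • (s • c) := by
  simp only [Apart, Set.mem_iUnion, Finset.mem_filter, Finset.mem_range, exists_prop,
    mem_sm_iff_eq, mem_orbSet]
  constructor
  · rintro ⟨k, ⟨hk, hi⟩, y, ⟨s, hs, c, hc, rfl⟩, rfl⟩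
    exact ⟨k, hk, hi, s, hs, c, hc, rfl⟩
  · rintro ⟨k, hk, hi, s, hs, c, hc, rfl⟩
    exact ⟨k, ⟨hk, hi⟩, s • c, ⟨s, hs, c, hc, rfl⟩, rfl⟩

theorem mem_SatC {C : Set T} {x : T} :
    x ∈ SatC u V N C ↔ ∃ k, k < N ∧ ∃ s ∈ V, ∃ c ∈ C, x = u ^ k • (s • c) := by
  simp only [SatC, Set.mem_iUnion, Finset.mem_range, exists_prop, mem_sm_iff_eq, mem_orbSet]
  constructor
  · rintro ⟨k, hk, y, ⟨s, hs, c, hc, rfl⟩, rfl⟩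
    exact ⟨k, hk, s, hs, c, hc, rfl⟩
  · rintro ⟨k, hk, s, hs, c, hc, rfl⟩
    exact ⟨k, hk, s • c, ⟨s, hs, c, hc, rfl⟩, rfl⟩

theorem apart_subset_satc {C : Set T} {i : ZMod p} :
    Apart u V N p C i ⊆ SatC u V N C := by
  intro x hx
  obtain ⟨k, hk, _, h⟩ := (mem_Apart u V N p).1 hx
  exact (mem_SatC u V N).2 ⟨k, hk, h⟩

theorem self_mem_satc (hN : 0 < N) {C : Set T} {x : T} (hx : x ∈ C) : x ∈ SatC u V N C :=
  (mem_SatC u V N).2 ⟨0, hN, 1, one_mem V, x, hx, by simp⟩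

theorem clopen_finsetUnion {X : Type} [TopologicalSpace X] {ι : Type*} (s : Finset ι)
    (f : ι → Set X) (h : ∀ i ∈ s, IsClopen (f i)) : IsClopen (⋃ i ∈ s, f i) := by
  classical
  induction s using Finset.induction with
  | empty => simpa using isClopen_empty
  | @insert a s ha ih =>
    rw [Finset.set_biUnion_insert]
    exact (h a (Finset.mem_insert_self a s)).union
      (ih fun i hi => h i (Finset.mem_insert_of_mem hi))

theorem isClopen_Apart (hcont : Continuous fun q : Γ × T => q.1 • q.2)
    (hVc : IsCompact (V : Set Γ)) {C : Set T} (hC : IsClopen C) {i : ZMod p} :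
    IsClopen (Apart u V N p C i) :=
  clopen_finsetUnion _ _ fun k _ => isClopen_sm hcont _ (isClopen_orbSet hcont hVc hC)

theorem isClopen_SatC (hcont : Continuous fun q : Γ × T => q.1 • q.2)
    (hVc : IsCompact (V : Set Γ)) {C : Set T} (hC : IsClopen C) :
    IsClopen (SatC u V N C) :=
  clopen_finsetUnion _ _ fun k _ => isClopen_sm hcont _ (isClopen_orbSet hcont hVc hC)

theorem shift_mem (hN : 0 < N) (hpN : p ∣ N) (huN : u ^ N ∈ V) {C : Set T} {i : ZMod p} {x : T}
    (hx : x ∈ Apart u V N p C i) : u • x ∈ Apart u V N p C (i + 1) := by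
  obtain ⟨k, hk, hi, s, hs, c, hc, rfl⟩ := (mem_Apart u V N p).1 hx
  by_cases hk1 : k + 1 < N
  · refine (mem_Apart u V N p).2 ⟨k + 1, hk1, ?_, s, hs, c, hc, ?_⟩
    · push_cast; rw [hi]
    · rw [pow_succ', mul_smul]
  · have hkN : k + 1 = N := by omega
    refine (mem_Apart u V N p).2 ⟨0, hN, ?_, u ^ N * s, V.mul_mem huN hs, c, hc, ?_⟩
    · have h1 : ((N : ℕ) : ZMod p) = 0 := (ZMod.natCast_eq_zero_iff N p).2 hpN
      have : ((k : ZMod p)) + 1 = ((N : ℕ) : ZMod p) := by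
        rw [← hkN]; push_cast; ring
      rw [← hi, Nat.cast_zero]
      rw [h1] at this
      exact this.symm
    · rw [pow_zero, one_smul, mul_smul, ← mul_smul, ← pow_succ', hkN]

theorem unshift_mem (huN : u ^ N ∈ V) {C : Set T} {x : T}
    (hx : u • x ∈ SatC u V N C) : x ∈ SatC u V N C := by
  obtain ⟨k, hk, s, hs, c, hc, heq⟩ := (mem_SatC u V N).1 hx
  rcases Nat.eq_zero_or_pos k with hk0 | hkpos
  · subst hk0
    rw [pow_zero, one_smul] at heq
    have hstep : u • (u ^ (N - 1) • (((u ^ N)⁻¹ * s) • c)) = s • c := by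
      rw [← mul_smul, ← mul_smul]
      congr 1
      rw [← pow_succ', show N - 1 + 1 = N by omega, mul_inv_cancel_left]
    exact (mem_SatC u V N).2 ⟨N - 1, by omega, (u ^ N)⁻¹ * s,
      V.mul_mem (V.inv_mem huN) hs, c, hc, smul_left_cancel u (heq.trans hstep.symm)⟩
  · have hk' : u ^ k = u * u ^ (k - 1) := by
      conv_lhs => rw [show k = (k - 1) + 1 by omega]
      rw [pow_succ']
    rw [hk', mul_smul] at heq
    exact (mem_SatC u V N).2 ⟨k - 1, by omega, s, hs, c, hc, smul_left_cancel u heq⟩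

theorem apart_disj (hVn : V.Normal) {C : Set T} (hsep : SepN u V p C) {i i' : ZMod p} {x : T}
    (h : x ∈ Apart u V N p C i) (h' : x ∈ Apart u V N p C i') : i = i' := by
  obtain ⟨k, hk, hi, s, hs, c, hc, heq⟩ := (mem_Apart u V N p).1 h
  obtain ⟨k', hk', hi', s', hs', c', hc', heq'⟩ := (mem_Apart u V N p).1 h'
  -- show c' = u ^ ((k:ℤ) - k') • (t • c) with t ∈ V
  set a : ℤ := (k : ℤ) - (k' : ℤ) with ha
  have hx1 : u ^ (k : ℤ) • (s • c) = x := by rw [zpow_natCast]; exact heq.symm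
  have hx2 : u ^ (k' : ℤ) • (s' • c') = x := by rw [zpow_natCast]; exact heq'.symm
  have key : c' = u ^ a • ((u ^ (-a) * s'⁻¹ * u ^ a * s) • c) := by
    have h1 : u ^ a • ((u ^ (-a) * s'⁻¹ * u ^ a * s) • c)
        = (s'⁻¹ * u ^ (-(k' : ℤ)) * u ^ (k : ℤ) * s) • c := by
      rw [← mul_smul]
      congr 1
      rw [ha]
      group
    rw [h1, mul_smul, mul_smul, mul_smul, hx1, ← hx2, zpow_neg, inv_smul_smul, inv_smul_smul]
  have ht : u ^ (-a) * s'⁻¹ * u ^ a * s ∈ V := by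
    apply V.mul_mem _ hs
    have hconj := hVn.conj_mem s'⁻¹ (V.inv_mem hs') (u ^ (-a))
    have : u ^ (-a) * s'⁻¹ * (u ^ (-a))⁻¹ = u ^ (-a) * s'⁻¹ * u ^ a := by
      rw [← zpow_neg, neg_neg]
    rwa [this] at hconj
  have hdvd : (p : ℤ) ∣ a := hsep c' hc' c hc a ⟨_, ht, key⟩
  have : ((a : ℤ) : ZMod p) = 0 := (ZMod.intCast_zmod_eq_zero_iff_dvd a p).2 hdvd
  rw [ha] at this
  push_cast at this
  rw [hi, hi'] at this
  exact sub_eq_zero.mp this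

theorem clopen_finsetInter {X : Type} [TopologicalSpace X] {ι : Type*} (s : Finset ι)
    (f : ι → Set X) (h : ∀ i ∈ s, IsClopen (f i)) : IsClopen (⋂ i ∈ s, f i) := by
  classical
  induction s using Finset.induction with
  | empty => simpa using isClopen_univ
  | @insert a s ha ih =>
    rw [Finset.set_biInter_insert]
    exact (h a (Finset.mem_insert_self a s)).inter
      (ih fun i hi => h i (Finset.mem_insert_of_mem hi))

theorem sep_exists (hcont : Continuous fun q : Γ × T => q.1 • q.2)
    (hVn : V.Normal) (hVc : IsCompact (V : Set Γ))
    (hN : 0 < N) (hpN : p ∣ N) (huN : u ^ N ∈ V)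
    {x : T} (hfx : ∀ k : ℤ, (∃ s ∈ V, u ^ k • x = s • x) → (p : ℤ) ∣ k) :
    ∃ C : Set T, IsClopen C ∧ x ∈ C ∧ SepN u V p C := by
  classical
  set B : Finset ℕ := (Finset.range N).filter (fun r => ¬ (p ∣ r)) with hB
  have hstep : ∀ r : ℕ, ∃ D : Set T, IsClopen D ∧ x ∈ D ∧
      (r ∈ B → ∀ y ∈ D, ∀ z ∈ D, ¬ ∃ s ∈ V, y = u ^ r • (s • z)) := by
    intro r
    by_cases hrB : r ∈ B
    swap
    · exact ⟨Set.univ, isClopen_univ, trivial, fun h => absurd h hrB⟩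
    obtain ⟨hrN, hrp⟩ := Finset.mem_filter.1 hrB
    set R : Set (T × T) :=
      (fun q : Γ × T => ((u ^ r * q.1) • q.2, q.2)) '' ((V : Set Γ) ×ˢ (Set.univ : Set T))
      with hR
    have hRclosed : IsClosed R := by
      apply IsCompact.isClosed
      apply IsCompact.image (hVc.prod isCompact_univ)
      exact (hcont.comp (((continuous_const.mul continuous_fst)).prodMk continuous_snd)).prodMk
        continuous_snd
    have hxx : (x, x) ∉ R := by
      rintro ⟨⟨s, z⟩, ⟨hs, -⟩, hq⟩
      have hz : z = x := congrArg Prod.snd hq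
      subst hz
      have h1 : (u ^ r * s) • z = z := congrArg Prod.fst hq
      have h2 : u ^ (r : ℤ) • z = (u ^ r * s⁻¹ * (u ^ r)⁻¹) • z := by
        have hinv : (u ^ r)⁻¹ • z = s • z := by
          conv_lhs => rw [← h1]
          rw [mul_smul, inv_smul_smul]
        rw [zpow_natCast, mul_smul, mul_smul, hinv, inv_smul_smul]
      have := hfx (r : ℤ) ⟨u ^ r * s⁻¹ * (u ^ r)⁻¹,
        (by simpa using hVn.conj_mem s⁻¹ (V.inv_mem hs) (u ^ r)), h2⟩
      exact hrp (by exact_mod_cast this)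
    obtain ⟨A1, A2, hA1, hA2, hxA1, hxA2, hsub⟩ :=
      isOpen_prod_iff.1 hRclosed.isOpen_compl x x hxx
    obtain ⟨D, hD, hxD, hDsub⟩ :=
      compact_exists_isClopen_in_isOpen (hA1.inter hA2) ⟨hxA1, hxA2⟩
    refine ⟨D, hD, hxD, fun _ => ?_⟩
    rintro y hy z hz ⟨s, hs, rfl⟩
    have hmem : (u ^ r • (s • z), z) ∈ R := ⟨⟨s, z⟩, ⟨hs, trivial⟩, by simp [mul_smul]⟩
    exact hsub ⟨(hDsub hy).1, (hDsub hz).2⟩ hmem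
  choose D hD1 hD2 hD3 using hstep
  refine ⟨⋂ r ∈ B, D r, clopen_finsetInter B D fun r _ => hD1 r, Set.mem_iInter₂.2 fun r _ => hD2 r, ?_⟩
  rintro y hy z hz k ⟨s, hs, hyz⟩
  by_contra hnd
  have hN0 : (0 : ℤ) < (N : ℤ) := by exact_mod_cast hN
  have hk : k % (N : ℤ) + (N : ℤ) * (k / (N : ℤ)) = k := Int.emod_add_mul_ediv k (N : ℤ)
  have hr0 : 0 ≤ k % (N : ℤ) := Int.emod_nonneg k (by omega)
  have hrlt : k % (N : ℤ) < (N : ℤ) := Int.emod_lt_of_pos k hN0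
  set r : ℕ := (k % (N : ℤ)).toNat with hrdef
  have hrr : (r : ℤ) = k % (N : ℤ) := Int.toNat_of_nonneg hr0
  have ht : u ^ ((N : ℤ) * (k / (N : ℤ))) * s ∈ V := by
    apply V.mul_mem _ hs
    rw [zpow_mul, zpow_natCast]
    exact Subgroup.zpow_mem V huN _
  have hmain : y = u ^ r • ((u ^ ((N : ℤ) * (k / (N : ℤ))) * s) • z) := by
    rw [hyz]
    conv_rhs => rw [mul_smul, ← zpow_natCast u r, ← mul_smul, ← zpow_add, hrr, hk]
  have hrB : r ∈ B := by
    rw [hB, Finset.mem_filter, Finset.mem_range]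
    constructor
    · omega
    · intro hpr
      apply hnd
      have h1 : (p : ℤ) ∣ (r : ℤ) := by exact_mod_cast hpr
      have h2 : (p : ℤ) ∣ (N : ℤ) := by exact_mod_cast hpN
      rw [← hk, ← hrr]
      exact dvd_add h1 (h2.mul_right _)
  exact hD3 r hrB y (Set.mem_iInter₂.1 hy r hrB) z (Set.mem_iInter₂.1 hz r hrB)
    ⟨_, ht, hmain⟩

theorem exists_shift (hcont : Continuous fun q : Γ × T => q.1 • q.2) [NeZero p]
    (hVn : V.Normal) (hVc : IsCompact (V : Set Γ))
    (hN : 0 < N) (hpN : p ∣ N) (huN : u ^ N ∈ V)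
    {K : Set T} (hK : IsCompact K)
    (hfree : ∀ x ∈ K, ∀ k : ℤ, (∃ s ∈ V, u ^ k • x = s • x) → (p : ℤ) ∣ k) :
    ∃ L : T → ZMod p, IsLocallyConstant L ∧ ∀ x ∈ K, L (u • x) = L x + 1 := by
  classical
  have hchoice : ∀ x : K, ∃ C : Set T, IsClopen C ∧ (x : T) ∈ C ∧ SepN u V p C :=
    fun x => sep_exists u V N p hcont hVn hVc hN hpN huN (hfree x x.2)
  choose Cf hCf1 hCf2 hCf3 using hchoice
  have hcov : K ⊆ ⋃ x : K, Cf x := fun y hy =>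
    Set.mem_iUnion.2 ⟨⟨y, hy⟩, hCf2 ⟨y, hy⟩⟩
  obtain ⟨t, ht⟩ := hK.elim_finite_subcover (fun x : K => Cf x) (fun x => (hCf1 x).2) hcov
  set l := t.toList with hl
  set n := l.length with hn
  set Cs : Fin n → Set T := fun j => Cf (l.get j) with hCs
  have hCsclopen : ∀ j, IsClopen (Cs j) := fun j => hCf1 _
  have hCssep : ∀ j, SepN u V p (Cs j) := fun j => hCf3 _
  have hcov' : ∀ y ∈ K, ∃ j : Fin n, y ∈ Cs j := by
    intro y hy
    obtain ⟨i, hit, hyi⟩ := Set.mem_iUnion₂.1 (ht hy)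
    obtain ⟨j, hj⟩ := List.mem_iff_get.1 (Finset.mem_toList.2 hit)
    refine ⟨j, ?_⟩
    rw [hCs]
    simp only
    rw [hj]
    exact hyi
  set Sat : Fin n → Set T := fun j => SatC u V N (Cs j) with hSat
  set Ap : Fin n → ZMod p → Set T := fun j i => Apart u V N p (Cs j) i with hAp
  set M : Fin n → Set T := fun j =>
    Sat j ∩ (⋃ j' ∈ Finset.univ.filter (fun j' : Fin n => j' < j), Sat j')ᶜ with hM
  have hSatclopen : ∀ j, IsClopen (Sat j) := fun j =>
    isClopen_SatC u V N hcont hVc (hCsclopen j)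
  have hApclopen : ∀ j i, IsClopen (Ap j i) := fun j i =>
    isClopen_Apart u V N p hcont hVc (hCsclopen j)
  have hMclopen : ∀ j, IsClopen (M j) := fun j =>
    (hSatclopen j).inter (clopen_finsetUnion _ _ fun j' _ => hSatclopen j').compl
  set L : T → ZMod p := fun x => ∑ j : Fin n, ∑ i : ZMod p,
      (if x ∈ M j ∩ Ap j i then i else 0) with hL
  have hLlc : IsLocallyConstant L := by
    rw [hL]
    apply sum_lc
    intro j _
    apply sum_lc
    intro i _
    exact ite_lc ((hMclopen j).inter (hApclopen j i)) i 0
  have heval : ∀ (x : T) (j : Fin n) (i : ZMod p), x ∈ M j → x ∈ Ap j i → L x = i := by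
    intro x j i hMj hAi
    rw [hL]
    simp only
    rw [Finset.sum_eq_single j]
    · rw [Finset.sum_eq_single i]
      · simp [hMj, hAi]
      · intro i' _ hne
        have hnot : x ∉ Ap j i' := fun h =>
          hne (apart_disj u V N p hVn (hCssep j) h hAi)
        simp [hnot]
      · intro h; exact absurd (Finset.mem_univ i) h
    · intro j' _ hne
      have hxj' : x ∉ M j' := by
        rcases lt_or_gt_of_ne hne with hlt | hgt
        · intro hx
          exact hMj.2 (Set.mem_iUnion₂.2 ⟨j', by simpa using hlt, hx.1⟩)
        · intro hx
          exact hx.2 (Set.mem_iUnion₂.2 ⟨j, by simpa using hgt,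
            apart_subset_satc u V N p hAi⟩)
      simp [hxj']
    · intro h; exact absurd (Finset.mem_univ j) h
  refine ⟨L, hLlc, ?_⟩
  intro x hx
  obtain ⟨j₀, hj₀⟩ := hcov' x hx
  set F := Finset.univ.filter (fun j : Fin n => x ∈ Sat j) with hF
  have hFne : F.Nonempty := ⟨j₀, by
    rw [hF, Finset.mem_filter]
    exact ⟨Finset.mem_univ _, self_mem_satc u V N hN hj₀⟩⟩
  set j := F.min' hFne with hj
  have hxSat : x ∈ Sat j := (Finset.mem_filter.1 (F.min'_mem hFne)).2
  have hnotbelow : ∀ j' : Fin n, j' < j → x ∉ Sat j' := by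
    intro j' hlt hmem
    have hle : j ≤ j' := F.min'_le j' (by rw [hF, Finset.mem_filter]; exact ⟨Finset.mem_univ _, hmem⟩)
    exact absurd hlt (not_lt.2 hle)
  have hxM : x ∈ M j := ⟨hxSat, by
    intro hmem
    obtain ⟨j', hj', hx'⟩ := Set.mem_iUnion₂.1 hmem
    exact hnotbelow j' (by simpa using hj') hx'⟩
  obtain ⟨k, hk, s, hs, c, hc, hxe⟩ := (mem_SatC u V N).1 hxSat
  have hxA : x ∈ Ap j ((k : ZMod p)) :=
    (mem_Apart u V N p).2 ⟨k, hk, rfl, s, hs, c, hc, hxe⟩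
  have hux_A : u • x ∈ Ap j ((k : ZMod p) + 1) := shift_mem u V N p hN hpN huN hxA
  have hux_M : u • x ∈ M j := ⟨apart_subset_satc u V N p hux_A, by
    intro hmem
    obtain ⟨j', hj', hx'⟩ := Set.mem_iUnion₂.1 hmem
    exact hnotbelow j' (by simpa using hj') (unshift_mem u V N huN hx')⟩
  rw [heval (u • x) j _ hux_M hux_A, heval x j _ hxM hxA]

end Shift

end NormFixAux

open NormFixAux

/-- Case 1 of Proposition 7.2 of the paper.  Let `G` be a pro-`p`
group acting on a pro-`p` tree `T` and let `U ≤ G` be a procyclic subgroup that does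
not stabilize any edge of `T` but stabilizes some vertex `v`.  Then the normalizer
`N_G(U)` fixes `v` (in particular `N_G(U) = N_{G_v}(U)`). -/
theorem normalizer_fixes_vertex (p : ℕ) [Fact p.Prime]
    {T : Type} [TopologicalSpace T] [CompactSpace T] [T2Space T]
    [TotallyDisconnectedSpace T]
    (G : ProfGraph T) (htree : G.IsProPTree p)
    (Γ : Type) [Group Γ] [TopologicalSpace Γ] [IsTopologicalGroup Γ]
    [CompactSpace Γ] [T2Space Γ] [TotallyDisconnectedSpace Γ]
    (hproP : ∀ V : OpenNormalSubgroup Γ, IsPGroup p (Γ ⧸ V.toSubgroup))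
    [MulAction Γ T] (hcont : Continuous fun q : Γ × T => q.1 • q.2)
    (hd0 : ∀ (g : Γ) (x : T), G.d0 (g • x) = g • G.d0 x)
    (hd1 : ∀ (g : Γ) (x : T), G.d1 (g • x) = g • G.d1 x)
    (U : Subgroup Γ)
    (hU : ∃ u : Γ, U = (Subgroup.zpowers u).topologicalClosure)
    (hnoedge : ∀ e : T, ¬ G.IsVertex e → ∃ u ∈ U, u • e ≠ e)
    (v : T) (hv : G.IsVertex v) (hfixv : ∀ u ∈ U, u • v = v) :
    ∀ n ∈ Subgroup.normalizer (U : Set Γ), n • v = v := by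
  classical
  have hp : p.Prime := Fact.out
  haveI : Fact (1 < p) := ⟨hp.one_lt⟩
  haveI : NeZero p := ⟨hp.ne_zero⟩
  intro n hn
  by_contra hne
  obtain ⟨u, hUdef⟩ := hU
  set w := n • v with hw
  have hUclosed : IsClosed (U : Set Γ) := by
    rw [hUdef]; exact Subgroup.isClosed_topologicalClosure _
  have hUcomp : IsCompact (U : Set Γ) := hUclosed.isCompact
  have humem : u ∈ U := by
    rw [hUdef]; exact Subgroup.le_topologicalClosure _ (Subgroup.mem_zpowers u)
  have hUfix : ∀ x : T, u • x = x → ∀ s ∈ U, s • x = x := by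
    intro x hux s hsU
    have hle : U ≤ MulAction.stabilizer Γ x := by
      rw [hUdef]
      apply Subgroup.topologicalClosure_minimal
      · rw [Subgroup.zpowers_le]; exact hux
      · exact isClosed_singleton.preimage (cont_smul' hcont x)
    exact hle hsU
  have humoves : ∀ e : T, ¬ G.IsVertex e → u • e ≠ e := by
    intro e he hue
    obtain ⟨s, hsU, hse⟩ := hnoedge e he
    exact hse (hUfix e hue s hsU)
  have hfixw : ∀ s ∈ U, s • w = w := by
    intro s hsU
    have hmem : n⁻¹ * s * n ∈ U := by
      have h2 := Subgroup.mem_normalizer_iff.1 hn (n⁻¹ * s * n)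
      have h3 : n * (n⁻¹ * s * n) * n⁻¹ = s := by group
      rw [h3] at h2
      exact h2.2 hsU
    rw [hw, ← mul_smul]
    have h4 : s * n = n * (n⁻¹ * s * n) := by group
    rw [h4, mul_smul, hfixv _ hmem]
  have hvert : ∀ (γ : Γ) (x : T), G.IsVertex x → G.IsVertex (γ • x) := by
    intro γ x hx
    unfold ProfGraph.IsVertex at *
    rw [hd0, hx]
  have hwvert : G.IsVertex w := hvert n v hv
  have hvw : v ≠ w := fun h => hne h.symm
  -- a clopen set separating v from w
  obtain ⟨C₀, hC₀, hvC₀, hwC₀⟩ : ∃ C₀ : Set T, IsClopen C₀ ∧ v ∈ C₀ ∧ w ∉ C₀ := by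
    haveI : TotallySeparatedSpace T := inferInstance
    obtain ⟨C₀, hC₀, hv₀, hw₀⟩ := exists_isClopen_of_totally_separated hvw
    exact ⟨C₀, hC₀, hv₀, fun h => hw₀ h⟩
  set W : Set T := orbSet (U : Set Γ) C₀ with hWdef
  have hWclopen : IsClopen W := isClopen_orbSet hcont hUcomp hC₀
  have hvW : v ∈ W := mem_orbSet.2 ⟨1, one_mem U, v, hvC₀, (one_smul _ _).symm⟩
  have hwW : w ∉ W := by
    intro hmem
    obtain ⟨s, hsU, c, hc, heq⟩ := mem_orbSet.1 hmem
    have h1 : s⁻¹ • w = c := by rw [heq, inv_smul_smul]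
    rw [hfixw s⁻¹ (U.inv_mem hsU)] at h1
    exact hwC₀ (h1 ▸ hc)
  have hWinv : ∀ s ∈ U, ∀ x : T, (s • x ∈ W ↔ x ∈ W) := by
    intro s hsU x
    constructor
    · intro hx
      obtain ⟨s', hs', c, hc, heq⟩ := mem_orbSet.1 hx
      refine mem_orbSet.2 ⟨s⁻¹ * s', U.mul_mem (U.inv_mem hsU) hs', c, hc, ?_⟩
      rw [mul_smul, ← heq, inv_smul_smul]
    · intro hx
      obtain ⟨s', hs', c, hc, heq⟩ := mem_orbSet.1 hx
      refine mem_orbSet.2 ⟨s * s', U.mul_mem hsU hs', c, hc, ?_⟩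
      rw [mul_smul, ← heq]
  set f0 : T → ZMod p := fun x => if x ∈ W then 1 else 0 with hf0def
  have hf0lc : IsLocallyConstant f0 := ite_lc hWclopen 1 0
  set f0v : G.Verts → ZMod p := fun y => f0 (y : T) with hf0vdef
  have hf0vlc : IsLocallyConstant f0v := hf0lc.comp_continuous continuous_subtype_val
  set g0 : T → ZMod p := fun x => f0 (G.d1 x) - f0 (G.d0 x) with hg0def
  have hg0lc : IsLocallyConstant g0 :=
    (hf0lc.comp_continuous G.cont1).comp₂ (hf0lc.comp_continuous G.cont0) (· - ·)
  have hg0vert : ∀ x, G.IsVertex x → g0 x = 0 := by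
    intro x hx
    have h0 : G.d0 x = x := hx
    have h1 : G.d1 x = x := by
      conv_lhs => rw [← h0]
      rw [G.d10, h0]
    rw [hg0def]
    simp only
    rw [h0, h1, sub_self]
  have hf0inv : ∀ s ∈ U, ∀ x, f0 (s • x) = f0 x := by
    intro s hsU x
    rw [hf0def]
    simp only
    by_cases hx : x ∈ W
    · rw [if_pos ((hWinv s hsU x).2 hx), if_pos hx]
    · rw [if_neg (fun h => hx ((hWinv s hsU x).1 h)), if_neg hx]
  have hg0inv : ∀ s ∈ U, ∀ x, g0 (s • x) = g0 x := by
    intro s hsU x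
    rw [hg0def]
    simp only
    rw [hd0, hd1, hf0inv s hsU, hf0inv s hsU]
  set K : Set T := {x | g0 x ≠ 0} with hKdef
  have hKclopen : IsClopen K := (hg0lc.isClopen_fiber 0).compl
  have hKcomp : IsCompact K := hKclopen.1.isCompact
  have hf0v1 : f0v ⟨v, hv⟩ = 1 := by rw [hf0vdef]; simp only; rw [hf0def]; simp only; rw [if_pos hvW]
  have hf0v0 : f0v ⟨w, hwvert⟩ = 0 := by rw [hf0vdef]; simp only; rw [hf0def]; simp only; rw [if_neg hwW]
  have hg0ed : ∀ x, g0 x = G.ed1 f0v x - G.ed0 f0v x := fun x => rfl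
  -- the final contradiction maker
  have hfinal : ∀ F : G.Verts → ZMod p, IsLocallyConstant F →
      (∀ x, G.ed0 F x = G.ed1 F x) → F ⟨v, hv⟩ = 1 → F ⟨w, hwvert⟩ = 0 → False := by
    intro F hFlc hFed hF1 hF0
    obtain ⟨c, hc⟩ := htree.2.1 F hFlc hFed
    have : (1 : ZMod p) = 0 := by rw [← hF1, ← hF0, hc, hc]
    exact one_ne_zero this
  -- case: no edges matter
  rcases Set.eq_empty_or_nonempty K with hKe | hKne
  · -- g0 ≡ 0, use f0v directly
    apply hfinal f0v hf0vlc _ hf0v1 hf0v0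
    intro x
    have hx0 : g0 x = 0 := by
      by_contra hxx
      exact absurd (hKe ▸ hxx : x ∈ (∅ : Set T)) (Set.notMem_empty x)
    have h5 : G.ed1 f0v x - G.ed0 f0v x = 0 := by rw [← hg0ed x]; exact hx0
    exact (sub_eq_zero.1 h5).symm
  · -- K nonempty : the interesting case
    obtain ⟨x₀, hx₀⟩ := hKne
    -- (a) uniform invariance neighborhood of 1
    have hA : ∃ Ω : Set Γ, IsOpen Ω ∧ (1 : Γ) ∈ Ω ∧ ∀ γ ∈ Ω, ∀ x : T, g0 (γ • x) = g0 x := by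
      have hpt : ∀ x : T, ∃ (Ω : Set Γ) (Nx : Set T), IsOpen Ω ∧ (1 : Γ) ∈ Ω ∧ IsOpen Nx ∧
          x ∈ Nx ∧ ∀ γ ∈ Ω, ∀ y ∈ Nx, g0 (γ • y) = g0 y := by
        intro x
        have hP : IsOpen {y | g0 y = g0 x} := hg0lc.isOpen_fiber (g0 x)
        have hpre : IsOpen ((fun q : Γ × T => q.1 • q.2) ⁻¹' {y | g0 y = g0 x}) :=
          hP.preimage hcont
        have h1x : ((1 : Γ), x) ∈ (fun q : Γ × T => q.1 • q.2) ⁻¹' {y | g0 y = g0 x} := by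
          simp only [Set.mem_preimage, Set.mem_setOf_eq, one_smul]
        obtain ⟨Ω, Nx, hΩ, hNx, h1, hxm, hsub⟩ := isOpen_prod_iff.1 hpre 1 x h1x
        refine ⟨Ω, Nx ∩ {y | g0 y = g0 x}, hΩ, h1, hNx.inter hP, ⟨hxm, rfl⟩, ?_⟩
        intro γ hγ y hy
        have h2 : g0 (γ • y) = g0 x := hsub (Set.mk_mem_prod hγ hy.1)
        rw [h2, hy.2]
      choose Ω Nx hΩ h1 hNx hxN hprop using hpt
      obtain ⟨t, ht⟩ := isCompact_univ.elim_finite_subcover Nx hNx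
        (fun x _ => Set.mem_iUnion.2 ⟨x, hxN x⟩)
      refine ⟨⋂ x ∈ t, Ω x, isOpen_biInter_finset (fun x _ => hΩ x),
        Set.mem_iInter₂.2 fun x _ => h1 x, ?_⟩
      intro γ hγ x
      obtain ⟨x₁, hx₁t, hxN₁⟩ := Set.mem_iUnion₂.1 (ht (Set.mem_univ x))
      exact hprop x₁ γ (Set.mem_iInter₂.1 hγ x₁ hx₁t) x hxN₁
    -- (b) uniform separation neighborhood of 1
    have hBex : ∃ Ω : Set Γ, IsOpen Ω ∧ (1 : Γ) ∈ Ω ∧ ∀ γ ∈ Ω, ∀ x ∈ K, u • x ≠ γ • x := by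
      have hpt : ∀ x : K, ∃ (Ω : Set Γ) (Nx : Set T), IsOpen Ω ∧ (1 : Γ) ∈ Ω ∧ IsOpen Nx ∧
          (x : T) ∈ Nx ∧ ∀ γ ∈ Ω, ∀ y ∈ Nx, u • y ≠ γ • y := by
        rintro ⟨x, hx⟩
        have hmove : u • x ≠ x := humoves x (fun hvx => hx (hg0vert x hvx))
        obtain ⟨D1, D2, hD1, hD2, hm1, hm2, hdisj⟩ := t2_separation hmove
        have hN1 : IsOpen ((fun y : T => u • y) ⁻¹' D1) := hD1.preimage (cont_smul hcont u)
        have hpre : IsOpen ((fun q : Γ × T => q.1 • q.2) ⁻¹' D2) := hD2.preimage hcont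
        have h1x : ((1 : Γ), x) ∈ (fun q : Γ × T => q.1 • q.2) ⁻¹' D2 := by
          simp only [Set.mem_preimage, one_smul]; exact hm2
        obtain ⟨Ω, N2, hΩ, hN2, h1, hxm, hsub⟩ := isOpen_prod_iff.1 hpre 1 x h1x
        refine ⟨Ω, (fun y : T => u • y) ⁻¹' D1 ∩ N2, hΩ, h1, hN1.inter hN2, ⟨hm1, hxm⟩, ?_⟩
        intro γ hγ y hy heq
        have hyD1 : u • y ∈ D1 := hy.1
        have hyD2 : γ • y ∈ D2 := hsub (Set.mk_mem_prod hγ hy.2)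
        rw [heq] at hyD1
        exact (Set.disjoint_left.1 hdisj hyD1) hyD2
      choose Ω Nx hΩ h1 hNx hxN hprop using hpt
      obtain ⟨t, ht⟩ := hKcomp.elim_finite_subcover (fun x : K => Nx x) (fun x => hNx x)
        (fun y hy => Set.mem_iUnion.2 ⟨⟨y, hy⟩, hxN ⟨y, hy⟩⟩)
      refine ⟨⋂ x ∈ t, Ω x, isOpen_biInter_finset (fun x _ => hΩ x),
        Set.mem_iInter₂.2 fun x _ => h1 x, ?_⟩
      intro γ hγ x hx
      obtain ⟨x₁, hx₁t, hxN₁⟩ := Set.mem_iUnion₂.1 (ht hx)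
      exact hprop x₁ γ (Set.mem_iInter₂.1 hγ x₁ hx₁t) x hxN₁
    obtain ⟨Ωa, hΩa, h1a, hpa⟩ := hA
    obtain ⟨Ωb, hΩb, h1b, hpb⟩ := hBex
    obtain ⟨Wc, hWc, h1Wc, hWcsub⟩ :=
      compact_exists_isClopen_in_isOpen (hΩa.inter hΩb) ⟨h1a, h1b⟩
    obtain ⟨V, hVsub⟩ :=
      IsTopologicalGroup.exist_openNormalSubgroup_sub_clopen_nhds_of_one hWc h1Wc
    have hVa : ∀ s ∈ V.toSubgroup, ∀ x : T, g0 (s • x) = g0 x := fun s hs x =>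
      hpa s (hWcsub (hVsub hs)).1 x
    have hVb : ∀ x ∈ K, ∀ s ∈ V.toSubgroup, u • x ≠ s • x := fun x hx s hs =>
      hpb s (hWcsub (hVsub hs)).2 x hx
    obtain ⟨m, hm⟩ := hproP V ((u : Γ) : Γ ⧸ V.toSubgroup)
    have humV : u ^ (p ^ m) ∈ V.toSubgroup := by
      have h6 : ((u ^ p ^ m : Γ) : Γ ⧸ V.toSubgroup) = 1 := by
        rw [← QuotientGroup.mk'_apply, map_pow, QuotientGroup.mk'_apply]
        exact hm
      exact (QuotientGroup.eq_one_iff _).1 h6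
    have hm1 : m ≠ 0 := by
      intro h0
      rw [h0, pow_zero, pow_one] at humV
      exact hVb x₀ hx₀ u humV rfl
    have hN : 0 < p ^ m := pow_pos hp.pos m
    have hpN : p ∣ p ^ m := dvd_pow_self p hm1
    have hVnormal : V.toSubgroup.Normal := V.isNormal'
    have hVcomp : IsCompact (V.toSubgroup : Set Γ) := V.toOpenSubgroup.isClosed.isCompact
    have hfree : ∀ x ∈ K, ∀ k : ℤ, (∃ s ∈ V.toSubgroup, u ^ k • x = s • x) → (p : ℤ) ∣ k := by
      intro x hx k hex
      by_contra hnd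
      have hkS : u ^ k ∈ relStab V.toSubgroup hVnormal x := hex
      have hNS : u ^ ((p ^ m : ℕ) : ℤ) ∈ relStab V.toSubgroup hVnormal x :=
        ⟨u ^ (p ^ m), humV, by rw [zpow_natCast]⟩
      have hg1 : Int.gcd k ((p ^ m : ℕ) : ℤ) = 1 := by
        have hd : Int.gcd k ((p ^ m : ℕ) : ℤ) ∣ p ^ m := by
          have h7 : ((Int.gcd k ((p ^ m : ℕ) : ℤ) : ℕ) : ℤ) ∣ ((p ^ m : ℕ) : ℤ) :=
            Int.gcd_dvd_right _ _
          exact_mod_cast h7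
        obtain ⟨t', ht', hteq⟩ := (Nat.dvd_prime_pow hp).1 hd
        rcases Nat.eq_zero_or_pos t' with ht0 | htpos
        · rw [hteq, ht0, pow_zero]
        · exfalso
          apply hnd
          have hpg : (p : ℤ) ∣ (Int.gcd k ((p ^ m : ℕ) : ℤ) : ℤ) := by
            rw [hteq]
            exact_mod_cast dvd_pow_self p htpos.ne'
          exact hpg.trans (Int.gcd_dvd_left _ _)
      have huS : u ∈ relStab V.toSubgroup hVnormal x := by
        have hbez := Int.gcd_eq_gcd_ab k ((p ^ m : ℕ) : ℤ)
        rw [hg1] at hbez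
        rw [Nat.cast_one] at hbez
        have h11 : u = u ^ (k * Int.gcdA k ((p ^ m : ℕ) : ℤ)
            + ((p ^ m : ℕ) : ℤ) * Int.gcdB k ((p ^ m : ℕ) : ℤ)) := by
          rw [← hbez, zpow_one]
        rw [h11, zpow_add, zpow_mul, zpow_mul]
        exact Subgroup.mul_mem _ (Subgroup.zpow_mem _ hkS _) (Subgroup.zpow_mem _ hNS _)
      obtain ⟨s, hs, hus⟩ := huS
      exact hVb x hx s hs hus
    obtain ⟨L, hLlc, hLshift⟩ := exists_shift u V.toSubgroup (p ^ m) p hcont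
      hVnormal hVcomp hN hpN humV hKcomp hfree
    have hfib : IsClopen (L ⁻¹' {0}) := hLlc.isClopen_fiber 0
    set g' : T → ZMod p := fun x =>
      (K ∩ L ⁻¹' {0}).indicator (fun _ => (1 : ZMod p)) x * g0 x with hg'def
    have hg'lc : IsLocallyConstant g' := by
      rw [hg'def]
      exact (indicator_lc (hKclopen.inter hfib) (1 : ZMod p)).comp₂ hg0lc (· * ·)
    have hg'vert : ∀ x, G.IsVertex x → g' x = 0 := by
      intro x hx
      rw [hg'def]
      simp only
      simp only [hg0vert x hx, mul_zero]
    have hg0u : ∀ z, g0 (u • z) = g0 z := hg0inv u humem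
    have hg0uinv : ∀ z, g0 (u⁻¹ • z) = g0 z := by
      intro z
      conv_rhs => rw [← smul_inv_smul u z]
      rw [hg0u]
    have hg0i : ∀ (i : ℕ) (x : T), g0 ((u ^ i)⁻¹ • x) = g0 x := by
      intro i
      induction i with
      | zero => intro x; rw [pow_zero, inv_one, one_smul]
      | succ i ih =>
        intro x
        have h8 : (u ^ (i + 1))⁻¹ • x = u⁻¹ • ((u ^ i)⁻¹ • x) := by
          rw [← mul_smul]
          congr 1
          rw [pow_succ, mul_inv_rev]
        rw [h8, hg0uinv, ih]
    have hKi : ∀ (i : ℕ) (x : T), x ∈ K → (u ^ i)⁻¹ • x ∈ K := by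
      intro i x hx
      show g0 ((u ^ i)⁻¹ • x) ≠ 0
      rw [hg0i]
      exact hx
    have hLi : ∀ x ∈ K, ∀ i : ℕ, L x = L ((u ^ i)⁻¹ • x) + ((i : ℕ) : ZMod p) := by
      intro x hx i
      induction i with
      | zero => rw [pow_zero, inv_one, one_smul, Nat.cast_zero, add_zero]
      | succ i ih =>
        have hyK : (u ^ (i + 1))⁻¹ • x ∈ K := hKi (i + 1) x hx
        have h9 : u • ((u ^ (i + 1))⁻¹ • x) = (u ^ i)⁻¹ • x := by
          rw [← mul_smul]
          congr 1
          rw [pow_succ, mul_inv_rev, mul_inv_cancel_left]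
        have h10 := hLshift _ hyK
        rw [h9] at h10
        rw [ih, h10]
        push_cast
        ring
    have hsum : ∀ x : T, g0 x = ∑ i ∈ Finset.range p, g' ((u ^ i)⁻¹ • x) := by
      intro x
      by_cases hx : x ∈ K
      · have hterm : ∀ i ∈ Finset.range p,
            g' ((u ^ i)⁻¹ • x) = if ((i : ℕ) : ZMod p) = L x then g0 x else 0 := by
          intro i _
          have hyK : (u ^ i)⁻¹ • x ∈ K := hKi i x hx
          have hLy := hLi x hx i
          rw [hg'def]
          simp only
          simp only [hg0i i x]
          by_cases hc : ((i : ℕ) : ZMod p) = L x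
          · have hL0 : L ((u ^ i)⁻¹ • x) = 0 := by
              have h12 := hLy
              rw [← hc] at h12
              linear_combination -h12
            have hmem9 : (u ^ i)⁻¹ • x ∈ K ∩ L ⁻¹' {0} := ⟨hyK, hL0⟩
            rw [Set.indicator_of_mem hmem9, one_mul, if_pos hc]
          · have hL0 : L ((u ^ i)⁻¹ • x) ≠ 0 := by
              intro h0
              apply hc
              rw [hLy, h0, zero_add]
            have hmem9 : (u ^ i)⁻¹ • x ∉ K ∩ L ⁻¹' {0} := fun hmem => hL0 hmem.2
            rw [Set.indicator_of_notMem hmem9, zero_mul, if_neg hc]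
        rw [Finset.sum_congr rfl hterm]
        have hval : (L x).val ∈ Finset.range p := Finset.mem_range.2 (ZMod.val_lt _)
        rw [Finset.sum_eq_single_of_mem _ hval]
        · rw [if_pos (ZMod.natCast_rightInverse (L x))]
        · intro i hi hne'
          rw [if_neg]
          intro hceq
          apply hne'
          have h13 := congrArg ZMod.val hceq
          rwa [ZMod.val_cast_of_lt (Finset.mem_range.1 hi)] at h13
      · have hx0 : g0 x = 0 := by
          by_contra h
          exact hx h
        rw [hx0]
        symm
        apply Finset.sum_eq_zero
        intro i _
        have hyn : (u ^ i)⁻¹ • x ∉ K := by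
          intro hy
          apply hx
          show g0 x ≠ 0
          rw [← hg0i i x]
          exact hy
        rw [hg'def]
        simp only
        have hmem9 : (u ^ i)⁻¹ • x ∉ K ∩ L ⁻¹' {0} := fun hmem => hyn hmem.1
        rw [Set.indicator_of_notMem hmem9, zero_mul]
    obtain ⟨h', hh'lc, hh'⟩ := htree.2.2 g' hg'lc hg'vert
    set F : G.Verts → ZMod p := fun y =>
      f0v y - ∑ i ∈ Finset.range p, h' ⟨(u ^ i)⁻¹ • (y : T), hvert _ _ y.2⟩ with hFdef
    have hFlc : IsLocallyConstant F := by
      apply IsLocallyConstant.comp₂ hf0vlc _ (· - ·)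
      apply sum_lc
      intro i _
      apply hh'lc.comp_continuous
      exact Continuous.subtype_mk
        ((cont_smul hcont (u ^ i)⁻¹).comp continuous_subtype_val) _
    have hFed : ∀ x, G.ed0 F x = G.ed1 F x := by
      intro x
      have hterm : ∀ i ∈ Finset.range p,
          h' ⟨(u ^ i)⁻¹ • (G.d1 x), hvert _ _ (G.isVertex_d1 x)⟩
            - h' ⟨(u ^ i)⁻¹ • (G.d0 x), hvert _ _ (G.isVertex_d0 x)⟩
            = g' ((u ^ i)⁻¹ • x) := by
        intro i _
        have e1 : (⟨(u ^ i)⁻¹ • (G.d1 x), hvert _ _ (G.isVertex_d1 x)⟩ : G.Verts)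
            = ⟨G.d1 ((u ^ i)⁻¹ • x), G.isVertex_d1 _⟩ := Subtype.ext ((hd1 _ x).symm)
        have e0 : (⟨(u ^ i)⁻¹ • (G.d0 x), hvert _ _ (G.isVertex_d0 x)⟩ : G.Verts)
            = ⟨G.d0 ((u ^ i)⁻¹ • x), G.isVertex_d0 _⟩ := Subtype.ext ((hd0 _ x).symm)
        rw [congrArg h' e1, congrArg h' e0, hh' ((u ^ i)⁻¹ • x)]
        rfl
      have hsplit : (∑ i ∈ Finset.range p,
            h' ⟨(u ^ i)⁻¹ • (G.d1 x), hvert _ _ (G.isVertex_d1 x)⟩)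
          - (∑ i ∈ Finset.range p,
            h' ⟨(u ^ i)⁻¹ • (G.d0 x), hvert _ _ (G.isVertex_d0 x)⟩)
          = f0 (G.d1 x) - f0 (G.d0 x) := by
        rw [← Finset.sum_sub_distrib, Finset.sum_congr rfl hterm, ← hsum x]
      have hu0 : G.ed0 F x = f0 (G.d0 x) - ∑ i ∈ Finset.range p,
          h' ⟨(u ^ i)⁻¹ • (G.d0 x), hvert _ _ (G.isVertex_d0 x)⟩ := rfl
      have hu1 : G.ed1 F x = f0 (G.d1 x) - ∑ i ∈ Finset.range p,
          h' ⟨(u ^ i)⁻¹ • (G.d1 x), hvert _ _ (G.isVertex_d1 x)⟩ := rfl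
      rw [hu0, hu1]
      linear_combination hsplit
    have hpowfix : ∀ (z : T), u • z = z → ∀ i : ℕ, (u ^ i)⁻¹ • z = z := by
      intro z hz i
      have hp' : ∀ j : ℕ, u ^ j • z = z := by
        intro j
        induction j with
        | zero => rw [pow_zero, one_smul]
        | succ j ih => rw [pow_succ, mul_smul, hz, ih]
      rw [inv_smul_eq_iff, hp' i]
    have hFv : F ⟨v, hv⟩ = 1 := by
      rw [hFdef]
      simp only
      have hsame : ∀ i ∈ Finset.range p,
          h' ⟨(u ^ i)⁻¹ • ((⟨v, hv⟩ : G.Verts) : T), hvert _ _ hv⟩ = h' ⟨v, hv⟩ := by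
        intro i _
        congr 1
        exact Subtype.ext (hpowfix v (hfixv u humem) i)
      rw [Finset.sum_congr rfl hsame, Finset.sum_const, Finset.card_range, hf0v1,
        nsmul_eq_mul, ZMod.natCast_self, zero_mul, sub_zero]
    have hFw : F ⟨w, hwvert⟩ = 0 := by
      rw [hFdef]
      simp only
      have hsame : ∀ i ∈ Finset.range p,
          h' ⟨(u ^ i)⁻¹ • ((⟨w, hwvert⟩ : G.Verts) : T), hvert _ _ hwvert⟩
            = h' ⟨w, hwvert⟩ := by
        intro i _
        congr 1
        exact Subtype.ext (hpowfix w (hfixw u humem) i)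
      rw [Finset.sum_congr rfl hsame, Finset.sum_const, Finset.card_range, hf0v0,
        nsmul_eq_mul, ZMod.natCast_self, zero_mul, sub_zero]
    exact hfinal F hFlc hFed hFv hFw
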